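/- Let D ≥ 1, let H be a real Hilbert space, let a : ℝ^D → H be a map, and set κ(θ,θ') := ⟨a(θ), a(θ')⟩ for θ,θ' ∈ ℝ^D. Assume κ is an admissible kernel and that S = {θ_1,…,θ_k} ⊆ ℝ^D (with θ_1,…,θ_k pairwise distinct) is admissible with respect to κ. Then the atoms a(θ_1),…,a(θ_k) are linearly independent in H. -/

import Mathlib

/-- A kernel on `ℝ^D` satisfies the vanishing property. -/
def VanishingProperty {D : ℕ} (κ : (Fin D → ℝ) → (Fin D → ℝ) → ℝ) : Prop :=
  ∀ ε : ℝ, 0 < ε → ∀ θ : Fin D → ℝ,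
    ∃ K : Set (Fin D → ℝ), IsCompact K ∧ ∀ θ' ∉ K, κ θ' θ < ε

/-- An admissible kernel: unit norm on the diagonal, continuity, vanishing property,
and `0 ≤ κ(θ,θ') < 1` off the diagonal. -/
def AdmissibleKernel {D : ℕ} (κ : (Fin D → ℝ) → (Fin D → ℝ) → ℝ) : Prop :=
  (∀ θ, κ θ θ = 1) ∧
  (∀ θ, Filter.Tendsto (fun θ' => κ θ θ') (nhds θ) (nhds 1)) ∧
  VanishingProperty κ ∧
  (∀ θ θ', θ ≠ θ' → 0 ≤ κ θ θ' ∧ κ θ θ' < 1)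

/-- A finite family of pairwise distinct points `θs : Fin k → ℝ^D` is admissible
with respect to the kernel `κ`. -/
def AdmissibleSupport {D k : ℕ} (κ : (Fin D → ℝ) → (Fin D → ℝ) → ℝ)
    (θs : Fin k → (Fin D → ℝ)) : Prop :=
  ∀ T : Finset (Fin k), T.Nonempty →
    ∀ c : Fin k → ℝ, (∀ ℓ ∈ T, 0 < c ℓ) → (∑ ℓ ∈ T, c ℓ) < 1 →
      ((∀ θm : Fin D → ℝ,
          (∀ θ : Fin D → ℝ,
            (∑ ℓ ∈ T, c ℓ * κ θ (θs ℓ)) ≤ ∑ ℓ ∈ T, c ℓ * κ θm (θs ℓ)) →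
          ∃ ℓ ∈ T, θm = θs ℓ) ∧
       (∀ ℓ : Fin k, ℓ ∉ T →
          (∀ ℓ' ∈ T, (∑ j ∈ T, c j * κ (θs ℓ') (θs j)) - κ (θs ℓ') (θs ℓ) ≤ 0) →
          ∀ θ : Fin D → ℝ, (∑ j ∈ T, c j * κ θ (θs j)) - κ θ (θs ℓ) ≤ 0))

lemma aux_disjoint_false {D k : ℕ} (κ : (Fin D → ℝ) → (Fin D → ℝ) → ℝ)
    (hker : AdmissibleKernel κ)
    (hcont : ∀ t : Fin D → ℝ, Continuous fun θ => κ θ t)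
    (θs : Fin k → (Fin D → ℝ)) (hinj : Function.Injective θs)
    (hsupp : AdmissibleSupport κ θs)
    (P N : Finset (Fin k)) (hdisj : Disjoint P N) (hP : P.Nonempty)
    (c : Fin k → ℝ) (hc : ∀ i ∈ P ∪ N, 0 < c i)
    (hsum : (∑ i ∈ P ∪ N, c i) < 1)
    (heq : ∀ θ, (∑ i ∈ P, c i * κ θ (θs i)) = ∑ i ∈ N, c i * κ θ (θs i)) :
    False := by
  obtain ⟨hdiag, _, hvanish, hoff⟩ := hker
  have hκnn : ∀ (θ : Fin D → ℝ) (j : Fin k), 0 ≤ κ θ (θs j) := by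
    intro θ j
    rcases eq_or_ne θ (θs j) with rfl | h
    · rw [hdiag]; norm_num
    · exact (hoff θ _ h).1
  have hcnn : ∀ i ∈ P ∪ N, (0:ℝ) ≤ c i := fun i hi => (hc i hi).le
  obtain ⟨p0, hp0⟩ := hP
  -- N is nonempty
  by_cases hN : N.Nonempty
  swap
  · rw [Finset.not_nonempty_iff_eq_empty] at hN
    have h1 := heq (θs p0)
    rw [hN, Finset.sum_empty] at h1
    have hpos : 0 < ∑ i ∈ P, c i * κ (θs p0) (θs i) := by
      apply Finset.sum_pos'
      · intro i hi
        exact mul_nonneg (hcnn i (Finset.mem_union_left _ hi)) (hκnn _ _)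
      · refine ⟨p0, hp0, ?_⟩
        rw [hdiag]
        simpa using hc p0 (Finset.mem_union_left _ hp0)
    linarith
  obtain ⟨n0, hn0⟩ := hN
  have hcP : ∀ i ∈ P, 0 < c i := fun i hi => hc i (Finset.mem_union_left _ hi)
  have hcN : ∀ i ∈ N, 0 < c i := fun i hi => hc i (Finset.mem_union_right _ hi)
  have hsumP : (∑ i ∈ P, c i) < 1 :=
    lt_of_le_of_lt (Finset.sum_le_sum_of_subset_of_nonneg Finset.subset_union_left
      (fun i hi _ => hcnn i hi)) hsum
  have hsumN : (∑ i ∈ N, c i) < 1 :=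
    lt_of_le_of_lt (Finset.sum_le_sum_of_subset_of_nonneg Finset.subset_union_right
      (fun i hi _ => hcnn i hi)) hsum
  set ψ : (Fin D → ℝ) → ℝ := fun θ => ∑ i ∈ P, c i * κ θ (θs i) with hψdef
  have hψn0 : c n0 ≤ ψ (θs n0) := by
    have h1 : ψ (θs n0) = ∑ i ∈ N, c i * κ (θs n0) (θs i) := heq _
    rw [h1]
    have := Finset.single_le_sum (f := fun i => c i * κ (θs n0) (θs i))
      (fun i hi => mul_nonneg (hcN i hi).le (hκnn _ _)) hn0
    simpa [hdiag] using this
  set S : ℝ := ∑ i ∈ P, c i with hSdef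
  have hS0 : 0 ≤ S := Finset.sum_nonneg (fun i hi => (hcP i hi).le)
  have hcn0 : 0 < c n0 := hcN n0 hn0
  set ε : ℝ := c n0 / (S + 1) with hεdef
  have hε : 0 < ε := div_pos hcn0 (by linarith)
  choose K hKc hKlt using hvanish ε hε
  set Kfull : Set (Fin D → ℝ) := (⋃ i ∈ (P : Set (Fin k)), K (θs i)) ∪ {θs n0}
    with hKfulldef
  have hKfullc : IsCompact Kfull :=
    (P.finite_toSet.isCompact_biUnion (fun i _ => hKc (θs i))).union isCompact_singleton
  have hψcont : Continuous ψ :=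
    continuous_finset_sum _ (fun i _ => continuous_const.mul (hcont (θs i)))
  have hn0mem : θs n0 ∈ Kfull := Or.inr rfl
  obtain ⟨θm, hθmK, hθm⟩ := hKfullc.exists_isMaxOn ⟨θs n0, hn0mem⟩ hψcont.continuousOn
  have hglob : ∀ θ, ψ θ ≤ ψ θm := by
    intro θ
    by_cases hθ : θ ∈ Kfull
    · exact hθm hθ
    · have hub : ψ θ ≤ S * ε := by
        calc ψ θ ≤ ∑ i ∈ P, c i * ε := by
              apply Finset.sum_le_sum
              intro i hi
              have hnotK : θ ∉ K (θs i) := fun hmem =>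
                hθ (Or.inl (Set.mem_biUnion hi hmem))
              exact mul_le_mul_of_nonneg_left (hKlt (θs i) θ hnotK).le (hcP i hi).le
          _ = S * ε := by rw [← Finset.sum_mul]
      have hlt : S * ε < c n0 := by
        have h2 : S * ε = (S * c n0) / (S + 1) := by rw [hεdef]; ring
        rw [h2, div_lt_iff₀ (by linarith : (0:ℝ) < S + 1)]
        nlinarith
      have hmaxn0 : ψ (θs n0) ≤ ψ θm := hθm hn0mem
      linarith
  obtain ⟨hmaxP, -⟩ := hsupp P ⟨p0, hp0⟩ c hcP hsumP
  obtain ⟨p, hpP, hpeq⟩ := hmaxP θm hglob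
  obtain ⟨hmaxN, -⟩ := hsupp N ⟨n0, hn0⟩ c hcN hsumN
  have hglobN : ∀ θ, (∑ i ∈ N, c i * κ θ (θs i)) ≤ ∑ i ∈ N, c i * κ θm (θs i) := by
    intro θ
    rw [← heq, ← heq]
    exact hglob θ
  obtain ⟨n, hnN, hneq⟩ := hmaxN θm hglobN
  have hpn : p = n := hinj (hpeq ▸ hneq)
  exact Finset.disjoint_left.mp hdisj hpP (hpn ▸ hnN)

/-- if the kernel is admissible and the support is admissible with
respect to it, then the atoms are linearly independent. -/
theorem atoms_linearIndependent_of_admissible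
    {D k : ℕ} (hD : 1 ≤ D) {H : Type*} [NormedAddCommGroup H]
    [InnerProductSpace ℝ H] [CompleteSpace H]
    (a : (Fin D → ℝ) → H)
    (κ : (Fin D → ℝ) → (Fin D → ℝ) → ℝ)
    (hκ : ∀ θ θ' : Fin D → ℝ, κ θ θ' = inner ℝ (a θ) (a θ'))
    (hker : AdmissibleKernel κ)
    (θs : Fin k → (Fin D → ℝ)) (hinj : Function.Injective θs)
    (hsupp : AdmissibleSupport κ θs) :
    LinearIndependent ℝ (fun ℓ => a (θs ℓ)) := by
  -- atoms have norm 1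
  have hnormsq : ∀ θ, (inner ℝ (a θ) (a θ) : ℝ) = 1 := by
    intro θ
    rw [← hκ, hker.1]
  -- a is continuous
  have hacont : Continuous a := by
    rw [continuous_iff_continuousAt]
    intro θ0
    rw [ContinuousAt, tendsto_iff_dist_tendsto_zero]
    have hval : ∀ θ', ‖a θ' - a θ0‖ ^ 2 = 2 - 2 * κ θ0 θ' := by
      intro θ'
      have h := @norm_sub_sq_real H _ _ (a θ') (a θ0)
      have h1 := hnormsq θ'
      have h2 := hnormsq θ0
      rw [real_inner_self_eq_norm_sq] at h1 h2
      have h3 : κ θ0 θ' = inner ℝ (a θ') (a θ0) := by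
        rw [hκ, real_inner_comm]
      rw [h, h3]; linarith
    have hsq : Filter.Tendsto (fun θ' => ‖a θ' - a θ0‖ ^ 2) (nhds θ0) (nhds 0) := by
      have h4 := (hker.2.1 θ0).const_mul (-2) |>.add_const 2
      rw [show (fun θ' => ‖a θ' - a θ0‖ ^ 2) = fun θ' => -2 * κ θ0 θ' + 2 by
        funext θ'; rw [hval θ']; ring]
      convert h4 using 2
      norm_num
    have hs' : Filter.Tendsto (fun θ' => ‖a θ' - a θ0‖) (nhds θ0) (nhds 0) := by
      have h6 := (Real.continuous_sqrt.tendsto 0).comp hsq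
      have h5 : ((fun x => Real.sqrt x) ∘ fun θ' => ‖a θ' - a θ0‖ ^ 2)
          = fun θ' => ‖a θ' - a θ0‖ := by
        funext θ'
        simp [Function.comp, Real.sqrt_sq (norm_nonneg _)]
      rw [h5] at h6
      simpa using h6
    simpa only [dist_eq_norm] using hs'
  have hcont : ∀ t : Fin D → ℝ, Continuous fun θ => κ θ t := by
    intro t
    have : Continuous fun θ => (inner ℝ (a θ) (a t) : ℝ) :=
      (continuous_inner.comp (hacont.prodMk continuous_const) : _)
    simpa only [← hκ] using this
  -- main argument
  by_contra hli
  obtain ⟨g, hg0, i0, hgi0⟩ := Fintype.not_linearIndependent_iff.mp hli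
  set s : ℝ := ∑ i, |g i| with hsdef
  have hs0 : 0 < s := by
    apply Finset.sum_pos' (fun i _ => abs_nonneg _)
    exact ⟨i0, Finset.mem_univ _, abs_pos.mpr hgi0⟩
  set d : Fin k → ℝ := fun i => g i / (2 * s) with hddef
  have hdsum : (∑ i, |d i|) = 1 / 2 := by
    simp only [hddef, abs_div, abs_of_pos (by linarith : (0:ℝ) < 2 * s)]
    rw [← Finset.sum_div, ← hsdef]
    field_simp
  have hdzero : ∀ θ, (∑ i, d i * κ θ (θs i)) = 0 := by
    intro θ
    have h1 : (∑ i, g i * κ θ (θs i)) = 0 := by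
      have : (∑ i, g i * κ θ (θs i)) = inner ℝ (a θ) (∑ i, g i • a (θs i)) := by
        rw [inner_sum]
        apply Finset.sum_congr rfl
        intro i _
        rw [hκ, real_inner_smul_right]
      rw [this, hg0, inner_zero_right]
    calc (∑ i, d i * κ θ (θs i)) = (∑ i, g i * κ θ (θs i)) / (2 * s) := by
          rw [Finset.sum_div]
          refine Finset.sum_congr rfl fun i _ => ?_
          simp only [hddef]
          ring
      _ = 0 := by rw [h1]; simp
  set P : Finset (Fin k) := Finset.univ.filter (fun i => 0 < d i) with hPdef
  set N : Finset (Fin k) := Finset.univ.filter (fun i => d i < 0) with hNdef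
  have hdisj : Disjoint P N := by
    rw [Finset.disjoint_left]
    intro i hiP hiN
    rw [hPdef, Finset.mem_filter] at hiP
    rw [hNdef, Finset.mem_filter] at hiN
    linarith [hiP.2, hiN.2]
  set c : Fin k → ℝ := fun i => |d i| with hcdef
  have hc : ∀ i ∈ P ∪ N, 0 < c i := by
    intro i hi
    rw [Finset.mem_union, hPdef, hNdef, Finset.mem_filter, Finset.mem_filter] at hi
    rw [hcdef]
    rcases hi with h | h
    · exact abs_pos.mpr (ne_of_gt h.2)
    · exact abs_pos.mpr (ne_of_lt h.2)
  have hdoff : ∀ i, i ∉ P ∪ N → d i = 0 := by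
    intro i hi
    rw [Finset.mem_union, hPdef, hNdef, Finset.mem_filter, Finset.mem_filter] at hi
    push_neg at hi
    have h1 := hi.1 (Finset.mem_univ i)
    have h2 := hi.2 (Finset.mem_univ i)
    linarith
  have hsumc : (∑ i ∈ P ∪ N, c i) < 1 := by
    have : (∑ i ∈ P ∪ N, c i) ≤ ∑ i, c i :=
      Finset.sum_le_sum_of_subset_of_nonneg (Finset.subset_univ _)
        (fun i _ _ => abs_nonneg _)
    rw [hcdef] at this ⊢
    rw [hdsum] at this
    linarith
  have heqkey : ∀ θ, (∑ i ∈ P, c i * κ θ (θs i)) = ∑ i ∈ N, c i * κ θ (θs i) := by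
    intro θ
    have h1 : (∑ i ∈ P ∪ N, d i * κ θ (θs i)) = 0 := by
      rw [← hdzero θ]
      exact Finset.sum_subset (Finset.subset_univ _)
        (fun i _ hi => by rw [hdoff i hi]; ring)
    rw [Finset.sum_union hdisj] at h1
    have hP2 : (∑ i ∈ P, c i * κ θ (θs i)) = ∑ i ∈ P, d i * κ θ (θs i) := by
      apply Finset.sum_congr rfl
      intro i hi
      rw [hPdef, Finset.mem_filter] at hi
      simp only [hcdef, abs_of_pos hi.2]
    have hN2 : (∑ i ∈ N, c i * κ θ (θs i)) = -∑ i ∈ N, d i * κ θ (θs i) := by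
      rw [← Finset.sum_neg_distrib]
      apply Finset.sum_congr rfl
      intro i hi
      rw [hNdef, Finset.mem_filter] at hi
      simp only [hcdef, abs_of_neg hi.2]
      ring
    rw [hP2, hN2]
    linarith
  have hi0mem : i0 ∈ P ∪ N := by
    by_contra hmem
    exact hgi0 (by
      have := hdoff i0 hmem
      rw [hddef] at this
      field_simp at this
      simpa using this)
  rw [Finset.mem_union] at hi0mem
  rcases hi0mem with h | h
  · exact aux_disjoint_false κ hker hcont θs hinj hsupp P N hdisj ⟨i0, h⟩ c hc hsumc heqkey
  · refine aux_disjoint_false κ hker hcont θs hinj hsupp N P hdisj.symm ⟨i0, h⟩ c ?_ ?_ ?_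
    · intro i hi
      exact hc i (by rwa [Finset.union_comm])
    · rwa [Finset.union_comm]
    · intro θ
      exact (heqkey θ).symm
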